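/- Let b̂ be an entire function with |b̂(ζ)| ≤ C e^{β|ζ|} for all ζ (C, β > 0), and let K(ξ,ζ) := Σ_{k≥1} ((−ξ)^k/k!) b̂^{*k}(ζ−ξ). Let ψ̂ be holomorphic on the open disc D(0,r), r > 0. Then for every ζ ∈ D(0,r) the series B̂ψ̂(ζ) := Σ_{k≥1} (1/k!) ( b̂^{*k} * ((−·)^k ψ̂) )(ζ) converges absolutely, defines a holomorphic function of ζ on D(0,r), and is given by the integral formula B̂ψ̂(ζ) = ∫₀^ζ K(ξ,ζ) ψ̂(ξ) dξ (integral along the segment [0,ζ]). -/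

import Mathlib

open Finset
open scoped Real

noncomputable section

/-- Convolution `(f*g)(ζ) := ∫₀^ζ f(ζ-ξ) g(ξ) dξ`, the integral being taken along
the line segment `[0,ζ]`, parametrised by `ξ = tζ`, `t ∈ [0,1]`. -/
def conv (f g : ℂ → ℂ) (ζ : ℂ) : ℂ :=
  ζ * ∫ t in (0:ℝ)..1, f (ζ - (t : ℂ) * ζ) * g ((t : ℂ) * ζ)

/-- Iterated convolution powers: `convIter f k = f^{*(k+1)}`, i.e.
`convIter f 0 = f^{*1} = f` and `convIter f (k+1) = f^{*(k+1)} * f`. -/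
def convIter (f : ℂ → ℂ) : ℕ → ℂ → ℂ
  | 0 => f
  | k + 1 => conv (convIter f k) f

/-- The kernel `K(ξ,ζ) := Σ_{k≥1} ((-ξ)^k / k!) f^{*k}(ζ-ξ)`. -/
def Kker (f : ℂ → ℂ) (ξ ζ : ℂ) : ℂ :=
  ∑' k : ℕ, ((-ξ) ^ (k + 1) / (Nat.factorial (k + 1) : ℂ)) * convIter f k (ζ - ξ)

open MeasureTheory Metric in
lemma conv_differentiableOn {f g : ℂ → ℂ} {r : ℝ}
    (hf : Differentiable ℂ f) (hg : DifferentiableOn ℂ g (ball (0:ℂ) r)) :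
    DifferentiableOn ℂ (conv f g) (ball (0:ℂ) r) := by
  intro ζ₀ hζ₀
  have hζ₀' : ‖ζ₀‖ < r := by simpa [mem_ball, dist_eq_norm] using hζ₀
  set ε : ℝ := (r - ‖ζ₀‖)/2 with hε
  have hεpos : 0 < ε := by simp only [hε]; linarith
  set ρ : ℝ := ‖ζ₀‖ + ε with hρ
  have hρr : ρ < r := by simp only [hρ, hε]; linarith
  have hρ0 : 0 ≤ ρ := by positivity
  -- membership facts
  have hballζ : ∀ ζ : ℂ, ζ ∈ ball ζ₀ ε → ‖ζ‖ ≤ ρ := by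
    intro ζ hζ
    have : ‖ζ - ζ₀‖ < ε := by simpa [mem_ball, dist_eq_norm] using hζ
    calc ‖ζ‖ = ‖ζ₀ + (ζ - ζ₀)‖ := by ring_nf
    _ ≤ ‖ζ₀‖ + ‖ζ - ζ₀‖ := norm_add_le _ _
    _ ≤ ρ := by simp only [hρ]; linarith
  have hmem1 : ∀ (ζ : ℂ), ‖ζ‖ ≤ ρ → ∀ t : ℝ, t ∈ Set.Icc (0:ℝ) 1 →
      (t:ℂ)*ζ ∈ closedBall (0:ℂ) ρ := by
    intro ζ hζ t ht
    simp only [mem_closedBall, dist_zero_right, norm_mul, Complex.norm_real]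
    calc ‖(t:ℝ)‖ * ‖ζ‖ ≤ 1 * ρ := by
          apply mul_le_mul _ hζ (norm_nonneg _) zero_le_one
          rw [Real.norm_eq_abs, abs_le]; constructor <;> [linarith [ht.1]; exact ht.2]
    _ = ρ := one_mul ρ
  have hmem2 : ∀ (ζ : ℂ), ‖ζ‖ ≤ ρ → ∀ t : ℝ, t ∈ Set.Icc (0:ℝ) 1 →
      ζ - (t:ℂ)*ζ ∈ closedBall (0:ℂ) ρ := by
    intro ζ hζ t ht
    have : ζ - (t:ℂ)*ζ = ((1 - t : ℝ) : ℂ) * ζ := by push_cast; ring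
    rw [this]
    simp only [mem_closedBall, dist_zero_right, norm_mul, Complex.norm_real]
    calc ‖(1 - t : ℝ)‖ * ‖ζ‖ ≤ 1 * ρ := by
          apply mul_le_mul _ hζ (norm_nonneg _) zero_le_one
          rw [Real.norm_eq_abs, abs_le]; constructor <;> [linarith [ht.2]; linarith [ht.1]]
    _ = ρ := one_mul ρ
  have hcbsub : closedBall (0:ℂ) ρ ⊆ ball (0:ℂ) r := closedBall_subset_ball hρr
  -- continuity facts
  have hfc : Continuous f := hf.continuous
  have hfan : AnalyticOnNhd ℂ f Set.univ := by
    intro z _; exact hf.analyticAt z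
  have hfdc : Continuous (deriv f) := by
    rw [← continuousOn_univ]
    exact (hfan.deriv.differentiableOn).continuousOn
  have hgan : AnalyticOnNhd ℂ g (ball (0:ℂ) r) := hg.analyticOnNhd isOpen_ball
  have hgc : ContinuousOn g (ball (0:ℂ) r) := hg.continuousOn
  have hgdc : ContinuousOn (deriv g) (ball (0:ℂ) r) :=
    (hgan.deriv.differentiableOn).continuousOn
  -- bounds on the compact set
  obtain ⟨Mf, hMf⟩ := (isCompact_closedBall (0:ℂ) ρ).exists_bound_of_continuousOn
    (hfc.continuousOn)
  obtain ⟨Mf', hMf'⟩ := (isCompact_closedBall (0:ℂ) ρ).exists_bound_of_continuousOn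
    (hfdc.continuousOn)
  obtain ⟨Mg, hMg⟩ := (isCompact_closedBall (0:ℂ) ρ).exists_bound_of_continuousOn
    (hgc.mono hcbsub)
  obtain ⟨Mg', hMg'⟩ := (isCompact_closedBall (0:ℂ) ρ).exists_bound_of_continuousOn
    (hgdc.mono hcbsub)
  have hMf0 : 0 ≤ Mf := le_trans (norm_nonneg _) (hMf 0 (mem_closedBall_self hρ0))
  have hMf'0 : 0 ≤ Mf' := le_trans (norm_nonneg _) (hMf' 0 (mem_closedBall_self hρ0))
  have hMg0 : 0 ≤ Mg := le_trans (norm_nonneg _) (hMg 0 (mem_closedBall_self hρ0))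
  have hMg'0 : 0 ≤ Mg' := le_trans (norm_nonneg _) (hMg' 0 (mem_closedBall_self hρ0))
  -- the parametric integrand and its derivative
  set F : ℂ → ℝ → ℂ := fun ζ t => f (ζ - (t:ℂ)*ζ) * g ((t:ℂ)*ζ) with hF
  set F' : ℂ → ℝ → ℂ := fun ζ t =>
    deriv f (ζ - (t:ℂ)*ζ) * (1 - (t:ℂ)) * g ((t:ℂ)*ζ)
      + f (ζ - (t:ℂ)*ζ) * (deriv g ((t:ℂ)*ζ) * (t:ℂ)) with hF'
  have hIoc : ∀ t : ℝ, t ∈ Set.uIoc (0:ℝ) 1 → t ∈ Set.Icc (0:ℝ) 1 := by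
    intro t ht
    rw [Set.uIoc_of_le zero_le_one] at ht
    exact ⟨le_of_lt ht.1, ht.2⟩
  -- derivative of the integrand
  have hderiv : ∀ t : ℝ, t ∈ Set.Icc (0:ℝ) 1 → ∀ ζ : ℂ, ‖ζ‖ ≤ ρ →
      HasDerivAt (fun ζ => F ζ t) (F' ζ t) ζ := by
    intro t ht ζ hζ
    have h1 : HasDerivAt (fun ζ : ℂ => ζ - (t:ℂ)*ζ) (1 - (t:ℂ)) ζ := by
      simpa using (hasDerivAt_id' ζ).fun_sub ((hasDerivAt_id' ζ).const_mul (t:ℂ))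
    have h2 : HasDerivAt (fun ζ : ℂ => (t:ℂ)*ζ) (t:ℂ) ζ := by
      simpa using (hasDerivAt_id ζ).const_mul (t:ℂ)
    have hfd : HasDerivAt (fun ζ : ℂ => f (ζ - (t:ℂ)*ζ))
        (deriv f (ζ - (t:ℂ)*ζ) * (1 - (t:ℂ))) ζ :=
      ((hf (ζ - (t:ℂ)*ζ)).hasDerivAt).comp ζ h1
    have hgat : DifferentiableAt ℂ g ((t:ℂ)*ζ) :=
      hg.differentiableAt (isOpen_ball.mem_nhds (hcbsub (hmem1 ζ hζ t ht)))
    have hgd : HasDerivAt (fun ζ : ℂ => g ((t:ℂ)*ζ))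
        (deriv g ((t:ℂ)*ζ) * (t:ℂ)) ζ := (hgat.hasDerivAt).comp ζ h2
    exact hfd.mul hgd
  -- bound on the derivative
  have hbound : ∀ t : ℝ, t ∈ Set.Icc (0:ℝ) 1 → ∀ ζ : ℂ, ‖ζ‖ ≤ ρ →
      ‖F' ζ t‖ ≤ Mf' * Mg + Mf * Mg' := by
    intro t ht ζ hζ
    have h1 := hMf' _ (hmem2 ζ hζ t ht)
    have h2 := hMg _ (hmem1 ζ hζ t ht)
    have h3 := hMf _ (hmem2 ζ hζ t ht)
    have h4 := hMg' _ (hmem1 ζ hζ t ht)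
    have ht1 : ‖(1 - (t:ℂ))‖ ≤ 1 := by
      have : (1 - (t:ℂ)) = ((1 - t : ℝ) : ℂ) := by push_cast; ring
      rw [this, Complex.norm_real, Real.norm_eq_abs, abs_le]
      constructor <;> [linarith [ht.2]; linarith [ht.1]]
    have ht2 : ‖(t:ℂ)‖ ≤ 1 := by
      rw [Complex.norm_real, Real.norm_eq_abs, abs_le]
      constructor <;> [linarith [ht.1]; exact ht.2]
    calc ‖F' ζ t‖ ≤ ‖deriv f (ζ - (t:ℂ)*ζ) * (1 - (t:ℂ)) * g ((t:ℂ)*ζ)‖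
        + ‖f (ζ - (t:ℂ)*ζ) * (deriv g ((t:ℂ)*ζ) * (t:ℂ))‖ := norm_add_le _ _
    _ = ‖deriv f (ζ - (t:ℂ)*ζ)‖ * ‖(1 - (t:ℂ))‖ * ‖g ((t:ℂ)*ζ)‖
        + ‖f (ζ - (t:ℂ)*ζ)‖ * (‖deriv g ((t:ℂ)*ζ)‖ * ‖(t:ℂ)‖) := by
        simp [norm_mul]
    _ ≤ Mf' * 1 * Mg + Mf * (Mg' * 1) := by
        refine add_le_add (mul_le_mul (mul_le_mul h1 ht1 (norm_nonneg _) hMf'0) h2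
          (norm_nonneg _) (by positivity)) (mul_le_mul h3 (mul_le_mul h4 ht2 (norm_nonneg _)
          hMg'0) (by positivity) hMf0)
    _ = Mf' * Mg + Mf * Mg' := by ring
  -- continuity in t
  have hc1 : ∀ ζ : ℂ, Continuous fun t : ℝ => ζ - (t:ℂ)*ζ := fun ζ =>
    continuous_const.sub (Complex.continuous_ofReal.mul continuous_const)
  have hc2 : ∀ ζ : ℂ, Continuous fun t : ℝ => (t:ℂ)*ζ := fun ζ =>
    Complex.continuous_ofReal.mul continuous_const
  have hFcont : ∀ ζ : ℂ, ‖ζ‖ ≤ ρ → ContinuousOn (F ζ) (Set.Icc (0:ℝ) 1) := by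
    intro ζ hζ
    apply ContinuousOn.mul
    · exact (hfc.comp (hc1 ζ)).continuousOn
    · apply (hgc.mono hcbsub).comp (hc2 ζ).continuousOn
      intro t ht
      exact hmem1 ζ hζ t ht
  have hF'cont : ∀ ζ : ℂ, ‖ζ‖ ≤ ρ → ContinuousOn (F' ζ) (Set.Icc (0:ℝ) 1) := by
    intro ζ hζ
    apply ContinuousOn.add
    · apply ContinuousOn.mul
      · apply ContinuousOn.mul
        · exact (hfdc.comp (hc1 ζ)).continuousOn
        · exact (continuous_const.sub Complex.continuous_ofReal).continuousOn
      · apply (hgc.mono hcbsub).comp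
          (hc2 ζ).continuousOn
        intro t ht; exact hmem1 ζ hζ t ht
    · apply ContinuousOn.mul
      · exact (hfc.comp (hc1 ζ)).continuousOn
      · apply ContinuousOn.mul
        · apply (hgdc.mono hcbsub).comp
            (hc2 ζ).continuousOn
          intro t ht; exact hmem1 ζ hζ t ht
        · exact Complex.continuous_ofReal.continuousOn
  -- apply the dominated differentiation theorem
  have key := intervalIntegral.hasDerivAt_integral_of_dominated_loc_of_deriv_le
    (F := F) (F' := F') (x₀ := ζ₀) (a := 0) (b := 1) (μ := volume)
    (bound := fun _ => Mf' * Mg + Mf * Mg') (Metric.ball_mem_nhds ζ₀ hεpos)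
    ?_ ?_ ?_ ?_ ?_ ?_
  · have hd : DifferentiableAt ℂ (fun ζ => ∫ t in (0:ℝ)..1, F ζ t) ζ₀ :=
      key.2.differentiableAt
    have : DifferentiableAt ℂ (conv f g) ζ₀ := by
      have : conv f g = fun ζ => ζ * ∫ t in (0:ℝ)..1, F ζ t := rfl
      rw [this]
      exact differentiableAt_id.mul hd
    exact this.differentiableWithinAt
  · filter_upwards [Metric.ball_mem_nhds ζ₀ hεpos] with ζ hζ
    exact ((hFcont ζ (hballζ ζ hζ)).mono (by
      intro t ht; exact hIoc t ht)).aestronglyMeasurable measurableSet_uIoc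
  · apply ContinuousOn.intervalIntegrable
    have := hFcont ζ₀ (by simp only [hρ]; linarith)
    simpa [Set.uIcc_of_le (zero_le_one (α := ℝ))] using this
  · exact ((hF'cont ζ₀ (by simp only [hρ]; linarith)).mono (by
      intro t ht; exact hIoc t ht)).aestronglyMeasurable measurableSet_uIoc
  · filter_upwards with t
    intro ht ζ hζ
    exact hbound t (hIoc t ht) ζ (hballζ ζ hζ)
  · exact intervalIntegrable_const
  · filter_upwards with t
    intro ht ζ hζ
    exact hderiv t (hIoc t ht) ζ (hballζ ζ hζ)

lemma conv_differentiable {f g : ℂ → ℂ} (hf : Differentiable ℂ f) (hg : Differentiable ℂ g) :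
    Differentiable ℂ (conv f g) := by
  intro z
  have hz : z ∈ Metric.ball (0:ℂ) (‖z‖ + 1) := by
    simp only [Metric.mem_ball, dist_zero_right]; linarith
  exact ((conv_differentiableOn (r := ‖z‖ + 1) hf hg.differentiableOn).differentiableAt
    (Metric.isOpen_ball.mem_nhds hz))

lemma convIter_differentiable {b : ℂ → ℂ} (hb : Differentiable ℂ b) :
    ∀ m, Differentiable ℂ (convIter b m)
  | 0 => hb
  | m + 1 => conv_differentiable (convIter_differentiable hb m) hb

open MeasureTheory in
lemma convIter_norm_le (b : ℂ → ℂ) {C β : ℝ} (hC : 0 ≤ C) (hβ : 0 ≤ β)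
    (hbd : ∀ z : ℂ, ‖b z‖ ≤ C * Real.exp (β * ‖z‖)) :
    ∀ (m : ℕ) (z : ℂ),
      ‖convIter b m z‖ ≤ C^(m+1) * ‖z‖^m / (Nat.factorial m) * Real.exp (β * ‖z‖) := by
  intro m
  induction m with
  | zero => intro z; simpa [convIter] using hbd z
  | succ m ih =>
    intro z
    have hfac : (0:ℝ) < (Nat.factorial m : ℝ) := by positivity
    set K : ℝ := C^(m+1) * C * ‖z‖^m / (Nat.factorial m) * Real.exp (β * ‖z‖) with hK
    have hK0 : 0 ≤ K := by positivity
    have hunfold : convIter b (m+1) z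
        = z * ∫ t in (0:ℝ)..1, convIter b m (z - (t:ℂ)*z) * b ((t:ℂ)*z) := rfl
    rw [hunfold, norm_mul]
    have hintle : ‖∫ t in (0:ℝ)..1, convIter b m (z - (t:ℂ)*z) * b ((t:ℂ)*z)‖
        ≤ |∫ t in (0:ℝ)..1, K * (1-t)^m| := by
      apply intervalIntegral.norm_integral_le_abs_of_norm_le
      · filter_upwards [MeasureTheory.ae_restrict_mem measurableSet_uIoc] with t ht
        rw [Set.uIoc_of_le zero_le_one] at ht
        have ht0 : 0 ≤ t := le_of_lt ht.1
        have ht1 : t ≤ 1 := ht.2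
        have hn1 : ‖z - (t:ℂ)*z‖ = (1-t) * ‖z‖ := by
          have : z - (t:ℂ)*z = ((1 - t : ℝ) : ℂ) * z := by push_cast; ring
          rw [this, norm_mul, Complex.norm_real, Real.norm_eq_abs,
            abs_of_nonneg (by linarith)]
        have hn2 : ‖(t:ℂ)*z‖ = t * ‖z‖ := by
          rw [norm_mul, Complex.norm_real, Real.norm_eq_abs, abs_of_nonneg ht0]
        calc ‖convIter b m (z - (t:ℂ)*z) * b ((t:ℂ)*z)‖
            = ‖convIter b m (z - (t:ℂ)*z)‖ * ‖b ((t:ℂ)*z)‖ := norm_mul _ _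
          _ ≤ (C^(m+1) * ‖z - (t:ℂ)*z‖^m / (Nat.factorial m)
                * Real.exp (β * ‖z - (t:ℂ)*z‖)) * (C * Real.exp (β * ‖(t:ℂ)*z‖)) :=
              mul_le_mul (ih _) (hbd _) (norm_nonneg _) (by positivity)
          _ = K * (1-t)^m := by
              rw [hn1, hn2, hK]
              have hexp : Real.exp (β * ((1-t) * ‖z‖)) * Real.exp (β * (t * ‖z‖))
                  = Real.exp (β * ‖z‖) := by
                rw [← Real.exp_add]; ring_nf
              rw [mul_pow, ← hexp]; ring
      · exact ((continuous_const.mul ((continuous_const.sub continuous_id).pow m))).intervalIntegrable 0 1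
    have hIval : (∫ t in (0:ℝ)..1, K * (1-t)^m) = K * (1/(m+1)) := by
      rw [intervalIntegral.integral_const_mul]
      have : (∫ t in (0:ℝ)..1, (1-t)^m) = ∫ t in (1-(1:ℝ))..(1-0), t^m := by
        exact intervalIntegral.integral_comp_sub_left (fun s : ℝ => s^m) 1
      rw [this]
      norm_num [integral_pow]
    have habs : |∫ t in (0:ℝ)..1, K * (1-t)^m| = K * (1/(m+1)) := by
      rw [hIval, abs_of_nonneg (by positivity)]
    calc ‖z‖ * ‖∫ t in (0:ℝ)..1, convIter b m (z - (t:ℂ)*z) * b ((t:ℂ)*z)‖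
        ≤ ‖z‖ * (K * (1/(m+1))) := by
          rw [← habs]; exact mul_le_mul_of_nonneg_left hintle (norm_nonneg _)
      _ = C^(m+1+1) * ‖z‖^(m+1) / (Nat.factorial (m+1)) * Real.exp (β * ‖z‖) := by
          rw [hK, Nat.factorial_succ]
          push_cast
          field_simp
          ring

/-- The master summable bound. -/
def vB (C β ρ M : ℝ) (m : ℕ) : ℝ :=
  (C^(m+1) * ρ^m / (Nat.factorial m) * Real.exp (β * ρ)) * (ρ^(m+1) * M)

lemma vB_nonneg {C β ρ M : ℝ} (hC : 0 ≤ C) (hρ : 0 ≤ ρ) (hM : 0 ≤ M) (m : ℕ) :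
    0 ≤ vB C β ρ M m := by
  unfold vB; positivity

lemma summable_vB {C β ρ M : ℝ} (hC : 0 ≤ C) (hρ : 0 ≤ ρ) (hM : 0 ≤ M) :
    Summable (vB C β ρ M) := by
  have hD1 : (1:ℝ) ≤ 1 + ρ := by linarith
  have hρD : ρ ≤ 1 + ρ := by linarith
  have hsum : Summable (fun m : ℕ =>
      (Real.exp (β * ρ) * M * (C * (1+ρ)^2)) * ((C * (1+ρ)^2)^m / (Nat.factorial m))) :=
    (Real.summable_pow_div_factorial (C * (1+ρ)^2)).mul_left _
  apply Summable.of_nonneg_of_le (fun m => vB_nonneg hC hρ hM m) _ hsum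
  intro m
  have hpow : ρ^m * ρ^(m+1) ≤ (1+ρ)^(2*m+2) := by
    rw [← pow_add]
    calc ρ^(m+(m+1)) ≤ (1+ρ)^(m+(m+1)) := pow_le_pow_left₀ hρ hρD _
      _ ≤ (1+ρ)^(2*m+2) := pow_le_pow_right₀ hD1 (by omega)
  have hkey : C^(m+1) * ((1+ρ)^(2*m+2)) = (C * (1+ρ)^2) * (C * (1+ρ)^2)^m := by
    rw [mul_pow, show 2*m+2 = 2*(m+1) by ring, pow_mul, pow_succ, pow_succ]
    ring
  calc vB C β ρ M m
      = (C^(m+1) * (ρ^m * ρ^(m+1)) * (Real.exp (β * ρ) * M)) / (Nat.factorial m) := by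
        unfold vB; ring
    _ ≤ (C^(m+1) * ((1+ρ)^(2*m+2)) * (Real.exp (β * ρ) * M)) / (Nat.factorial m) := by
        gcongr
    _ = (Real.exp (β * ρ) * M * (C * (1+ρ)^2)) * ((C * (1+ρ)^2)^m / (Nat.factorial m)) := by
        rw [hkey]; ring

section
variable {b ψ : ℂ → ℂ} {C β ρ M : ℝ}

lemma tζ_norm_le {ζ : ℂ} (hζ : ‖ζ‖ ≤ ρ) {t : ℝ} (ht : t ∈ Set.Icc (0:ℝ) 1) :
    ‖(t:ℂ)*ζ‖ ≤ ρ := by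
  rw [norm_mul, Complex.norm_real, Real.norm_eq_abs, abs_of_nonneg ht.1]
  calc t * ‖ζ‖ ≤ 1 * ρ :=
    mul_le_mul ht.2 hζ (norm_nonneg _) zero_le_one
  _ = ρ := one_mul ρ

lemma sub_tζ_norm_le {ζ : ℂ} (hζ : ‖ζ‖ ≤ ρ) {t : ℝ} (ht : t ∈ Set.Icc (0:ℝ) 1) :
    ‖ζ - (t:ℂ)*ζ‖ ≤ ρ := by
  have : ζ - (t:ℂ)*ζ = ((1 - t : ℝ) : ℂ) * ζ := by push_cast; ring
  rw [this, norm_mul, Complex.norm_real, Real.norm_eq_abs, abs_of_nonneg (by linarith [ht.2])]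
  calc (1-t) * ‖ζ‖ ≤ 1 * ρ :=
    mul_le_mul (by linarith [ht.1]) hζ (norm_nonneg _) zero_le_one
  _ = ρ := one_mul ρ

lemma integrand_bound (hC : 0 ≤ C) (hβ : 0 ≤ β) (hρ : 0 ≤ ρ) (hM : 0 ≤ M)
    (hconv : ∀ (m : ℕ) (z : ℂ),
      ‖convIter b m z‖ ≤ C^(m+1) * ‖z‖^m / (Nat.factorial m) * Real.exp (β * ‖z‖))
    (hψM : ∀ z : ℂ, ‖z‖ ≤ ρ → ‖ψ z‖ ≤ M)
    {ζ : ℂ} (hζ : ‖ζ‖ ≤ ρ) {t : ℝ} (ht : t ∈ Set.Icc (0:ℝ) 1) (m : ℕ) :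
    ‖convIter b m (ζ - (t:ℂ)*ζ)‖ * (‖(t:ℂ)*ζ‖^(m+1) * ‖ψ ((t:ℂ)*ζ)‖) ≤ vB C β ρ M m := by
  have hn2 : ‖(t:ℂ)*ζ‖ ≤ ρ := tζ_norm_le hζ ht
  have hn1 : ‖ζ - (t:ℂ)*ζ‖ ≤ ρ := sub_tζ_norm_le hζ ht
  have h1 : ‖convIter b m (ζ - (t:ℂ)*ζ)‖
      ≤ C^(m+1) * ρ^m / (Nat.factorial m) * Real.exp (β * ρ) := by
    refine (hconv m _).trans ?_
    gcongr <;> exact hn1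
  have h2 : ‖(t:ℂ)*ζ‖^(m+1) ≤ ρ^(m+1) := pow_le_pow_left₀ (norm_nonneg _) hn2 _
  have h3 : ‖ψ ((t:ℂ)*ζ)‖ ≤ M := hψM _ hn2
  exact mul_le_mul h1 (mul_le_mul h2 h3 (norm_nonneg _) (by positivity))
    (by positivity) (by positivity)

lemma term_bound (hC : 0 ≤ C) (hβ : 0 ≤ β) (hρ : 0 ≤ ρ) (hM : 0 ≤ M)
    (hconv : ∀ (m : ℕ) (z : ℂ),
      ‖convIter b m z‖ ≤ C^(m+1) * ‖z‖^m / (Nat.factorial m) * Real.exp (β * ‖z‖))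
    (hψM : ∀ z : ℂ, ‖z‖ ≤ ρ → ‖ψ z‖ ≤ M)
    {ζ : ℂ} (hζ : ‖ζ‖ ≤ ρ) (m : ℕ) :
    ‖(Nat.factorial (m + 1) : ℂ)⁻¹ *
      conv (convIter b m) (fun ξ => (-ξ) ^ (m + 1) * ψ ξ) ζ‖ ≤ ρ * vB C β ρ M m := by
  have hvB0 : 0 ≤ vB C β ρ M m := vB_nonneg hC hρ hM m
  have hint : ‖∫ t in (0:ℝ)..1, convIter b m (ζ - (t:ℂ)*ζ)
      * ((-((t:ℂ)*ζ))^(m+1) * ψ ((t:ℂ)*ζ))‖ ≤ vB C β ρ M m * |1 - 0| := by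
    apply intervalIntegral.norm_integral_le_of_norm_le_const
    intro t ht
    rw [Set.uIoc_of_le zero_le_one] at ht
    have ht' : t ∈ Set.Icc (0:ℝ) 1 := ⟨le_of_lt ht.1, ht.2⟩
    calc ‖convIter b m (ζ - (t:ℂ)*ζ) * ((-((t:ℂ)*ζ))^(m+1) * ψ ((t:ℂ)*ζ))‖
        = ‖convIter b m (ζ - (t:ℂ)*ζ)‖ * (‖(t:ℂ)*ζ‖^(m+1) * ‖ψ ((t:ℂ)*ζ)‖) := by
          rw [norm_mul, norm_mul, norm_pow, norm_neg]
      _ ≤ vB C β ρ M m := integrand_bound hC hβ hρ hM hconv hψM hζ ht' m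
  have hfac1 : (1:ℝ) ≤ (Nat.factorial (m+1) : ℝ) := by
    exact_mod_cast Nat.one_le_iff_ne_zero.2 (Nat.factorial_ne_zero (m+1))
  have hninv : ‖(Nat.factorial (m+1) : ℂ)⁻¹‖ ≤ 1 := by
    rw [norm_inv, Complex.norm_natCast]
    exact inv_le_one_of_one_le₀ hfac1
  calc ‖(Nat.factorial (m + 1) : ℂ)⁻¹ *
      conv (convIter b m) (fun ξ => (-ξ) ^ (m + 1) * ψ ξ) ζ‖
      = ‖(Nat.factorial (m+1) : ℂ)⁻¹‖ * (‖ζ‖ * ‖∫ t in (0:ℝ)..1, convIter b m (ζ - (t:ℂ)*ζ)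
        * ((-((t:ℂ)*ζ))^(m+1) * ψ ((t:ℂ)*ζ))‖) := by
        rw [show conv (convIter b m) (fun ξ => (-ξ) ^ (m + 1) * ψ ξ) ζ
          = ζ * ∫ t in (0:ℝ)..1, convIter b m (ζ - (t:ℂ)*ζ)
            * ((-((t:ℂ)*ζ))^(m+1) * ψ ((t:ℂ)*ζ)) from rfl, norm_mul, norm_mul]
    _ ≤ 1 * (ρ * (vB C β ρ M m * |1 - 0|)) := by
        refine mul_le_mul hninv (mul_le_mul hζ hint (norm_nonneg _) hρ)
          (by positivity) zero_le_one
    _ = ρ * vB C β ρ M m := by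
        rw [show |(1:ℝ) - 0| = 1 by norm_num]; ring
end


open MeasureTheory in
/-- with `b̂` entire, `|b̂| ≤ C e^{β|·|}`, and `ψ̂` holomorphic on the
disc `D(0,r)`, for every `ζ ∈ D(0,r)` the series
`B̂ψ̂(ζ) := Σ_{k≥1} (1/k!) (b̂^{*k} * ((-·)^k ψ̂))(ζ)` converges absolutely, defines
a holomorphic function of `ζ` on `D(0,r)`, and equals `∫₀^ζ K(ξ,ζ) ψ̂(ξ) dξ`
(integral along the segment `[0,ζ]`, parametrised by `ξ = tζ`). The index is
shifted: the `m`-th term below is the `k = m+1` term of the series. -/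
theorem statement7 (b : ℂ → ℂ) (hb : Differentiable ℂ b)
    (C β : ℝ) (hC : 0 < C) (hβ : 0 < β)
    (hbd : ∀ ζ : ℂ, ‖b ζ‖ ≤ C * Real.exp (β * ‖ζ‖))
    (ψ : ℂ → ℂ) (r : ℝ) (hr : 0 < r)
    (hψ : DifferentiableOn ℂ ψ (Metric.ball (0 : ℂ) r)) :
    (∀ ζ ∈ Metric.ball (0 : ℂ) r, Summable fun m : ℕ =>
      ‖(Nat.factorial (m + 1) : ℂ)⁻¹ *
        conv (convIter b m) (fun ξ => (-ξ) ^ (m + 1) * ψ ξ) ζ‖) ∧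
    DifferentiableOn ℂ
      (fun ζ => ∑' m : ℕ, (Nat.factorial (m + 1) : ℂ)⁻¹ *
        conv (convIter b m) (fun ξ => (-ξ) ^ (m + 1) * ψ ξ) ζ)
      (Metric.ball (0 : ℂ) r) ∧
    (∀ ζ ∈ Metric.ball (0 : ℂ) r,
      (∑' m : ℕ, (Nat.factorial (m + 1) : ℂ)⁻¹ *
        conv (convIter b m) (fun ξ => (-ξ) ^ (m + 1) * ψ ξ) ζ)
      = ζ * ∫ t in (0:ℝ)..1, Kker b ((t : ℂ) * ζ) ζ * ψ ((t : ℂ) * ζ)) := by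
  have hconv := convIter_norm_le b hC.le hβ.le hbd
  have hψbound : ∀ ρ : ℝ, ρ < r → ∃ M : ℝ, 0 ≤ M ∧ ∀ z : ℂ, ‖z‖ ≤ ρ → ‖ψ z‖ ≤ M := by
    intro ρ hρr
    obtain ⟨M, hM⟩ := (isCompact_closedBall (0:ℂ) ρ).exists_bound_of_continuousOn
      (hψ.continuousOn.mono (Metric.closedBall_subset_ball hρr))
    refine ⟨max M 0, le_max_right _ _, fun z hz => le_trans (hM z ?_) (le_max_left _ _)⟩
    simpa [Metric.mem_closedBall, dist_zero_right] using hz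
  refine ⟨?_, ?_, ?_⟩
  · -- Part 1: summability
    intro ζ hζ
    have hζr : ‖ζ‖ < r := by simpa [Metric.mem_ball, dist_zero_right] using hζ
    obtain ⟨M, hM0, hψM⟩ := hψbound ‖ζ‖ hζr
    exact Summable.of_nonneg_of_le (fun m => norm_nonneg _)
      (fun m => term_bound hC.le hβ.le (norm_nonneg ζ) hM0 hconv hψM (le_refl _) m)
      ((summable_vB hC.le (norm_nonneg ζ) hM0).mul_left ‖ζ‖)
  · -- Part 2: differentiability
    intro ζ₀ hζ₀
    have hζ₀r : ‖ζ₀‖ < r := by simpa [Metric.mem_ball, dist_zero_right] using hζ₀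
    set ρ : ℝ := (‖ζ₀‖ + r)/2 with hρdef
    have hρ0 : 0 ≤ ρ := by positivity
    have hρr : ρ < r := by rw [hρdef]; linarith
    have hζ₀ρ : ‖ζ₀‖ < ρ := by rw [hρdef]; linarith
    obtain ⟨M, hM0, hψM⟩ := hψbound ρ hρr
    have hdiff : DifferentiableOn ℂ
        (fun ζ => ∑' m : ℕ, (Nat.factorial (m + 1) : ℂ)⁻¹ *
          conv (convIter b m) (fun ξ => (-ξ) ^ (m + 1) * ψ ξ) ζ)
        (Metric.ball (0:ℂ) ρ) := by
      apply Complex.differentiableOn_tsum_of_summable_norm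
        ((summable_vB hC.le hρ0 hM0).mul_left ρ)
      · intro m
        have hg : DifferentiableOn ℂ (fun ξ : ℂ => (-ξ)^(m+1) * ψ ξ) (Metric.ball (0:ℂ) r) :=
          ((differentiable_id.neg.pow _).differentiableOn).mul hψ
        exact ((conv_differentiableOn (convIter_differentiable hb m) hg).mono
          (Metric.ball_subset_ball hρr.le)).const_mul _
      · exact Metric.isOpen_ball
      · intro m w hw
        have hwρ : ‖w‖ ≤ ρ := le_of_lt (by simpa [Metric.mem_ball, dist_zero_right] using hw)
        exact term_bound hC.le hβ.le hρ0 hM0 hconv hψM hwρ m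
    exact (hdiff.differentiableAt (Metric.isOpen_ball.mem_nhds
      (by simpa [Metric.mem_ball, dist_zero_right] using hζ₀ρ))).differentiableWithinAt
  · -- Part 3: integral formula
    intro ζ hζ
    have hζr : ‖ζ‖ < r := by simpa [Metric.mem_ball, dist_zero_right] using hζ
    obtain ⟨M, hM0, hψM⟩ := hψbound ‖ζ‖ hζr
    set h : ℕ → ℝ → ℂ := fun m t =>
      ((-((t:ℂ)*ζ)) ^ (m+1) / (Nat.factorial (m+1) : ℂ)) * convIter b m (ζ - (t:ℂ)*ζ)
        * ψ ((t:ℂ)*ζ) with hh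
    -- each term equals ζ * ∫ h m
    have hstep1 : ∀ m : ℕ, (Nat.factorial (m+1) : ℂ)⁻¹ *
        conv (convIter b m) (fun ξ => (-ξ)^(m+1) * ψ ξ) ζ
        = ζ * ∫ t in (0:ℝ)..1, h m t := by
      intro m
      show (Nat.factorial (m+1) : ℂ)⁻¹ * (ζ * ∫ t in (0:ℝ)..1,
        convIter b m (ζ - (t:ℂ)*ζ) * ((-((t:ℂ)*ζ))^(m+1) * ψ ((t:ℂ)*ζ))) = _
      rw [mul_left_comm, ← intervalIntegral.integral_const_mul]
      congr 1
      apply intervalIntegral.integral_congr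
      intro t _
      simp only [hh]
      ring
    -- continuity and integrability of h m
    have hc2 : Continuous fun t : ℝ => (t:ℂ)*ζ := Complex.continuous_ofReal.mul continuous_const
    have hc1 : Continuous fun t : ℝ => ζ - (t:ℂ)*ζ := continuous_const.sub hc2
    have hcont : ∀ m : ℕ, ContinuousOn (h m) (Set.Icc (0:ℝ) 1) := by
      intro m
      apply ContinuousOn.mul
      apply ContinuousOn.mul
      · exact ((hc2.neg.pow _).div_const _).continuousOn
      · exact ((convIter_differentiable hb m).continuous.comp hc1).continuousOn
      · apply (hψ.continuousOn.mono (Metric.closedBall_subset_ball hζr)).comp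
          hc2.continuousOn
        intro t ht
        simpa [Metric.mem_closedBall, dist_zero_right] using tζ_norm_le (le_refl ‖ζ‖) ht
    have hInt : ∀ m : ℕ, IntegrableOn (h m) (Set.Ioc (0:ℝ) 1) := fun m =>
      ((hcont m).integrableOn_Icc).mono_set Set.Ioc_subset_Icc_self
    -- pointwise norm bound
    have hnorm_h : ∀ m : ℕ, ∀ t ∈ Set.Icc (0:ℝ) 1, ‖h m t‖ ≤ vB C β ‖ζ‖ M m := by
      intro m t ht
      have hfac1 : (1:ℝ) ≤ (Nat.factorial (m+1) : ℝ) := by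
        exact_mod_cast Nat.one_le_iff_ne_zero.2 (Nat.factorial_ne_zero (m+1))
      calc ‖h m t‖ = ‖(t:ℂ)*ζ‖^(m+1) / (Nat.factorial (m+1) : ℝ)
            * ‖convIter b m (ζ - (t:ℂ)*ζ)‖ * ‖ψ ((t:ℂ)*ζ)‖ := by
            simp only [hh, norm_mul, norm_div, norm_pow, norm_neg, Complex.norm_natCast]
        _ ≤ ‖(t:ℂ)*ζ‖^(m+1) * ‖convIter b m (ζ - (t:ℂ)*ζ)‖ * ‖ψ ((t:ℂ)*ζ)‖ := by
            gcongr
            exact div_le_self (by positivity) hfac1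
        _ = ‖convIter b m (ζ - (t:ℂ)*ζ)‖ * (‖(t:ℂ)*ζ‖^(m+1) * ‖ψ ((t:ℂ)*ζ)‖) := by ring
        _ ≤ vB C β ‖ζ‖ M m :=
            integrand_bound hC.le hβ.le (norm_nonneg ζ) hM0 hconv hψM (le_refl _) ht m
    -- integral norm bounds
    have hIntNorm : ∀ m : ℕ, (∫ t in Set.Ioc (0:ℝ) 1, ‖h m t‖) ≤ vB C β ‖ζ‖ M m := by
      intro m
      have hle : ∀ᵐ t ∂(volume.restrict (Set.Ioc (0:ℝ) 1)),
          ‖h m t‖ ≤ vB C β ‖ζ‖ M m :=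
        (ae_restrict_mem measurableSet_Ioc).mono fun t ht =>
          hnorm_h m t (Set.Ioc_subset_Icc_self ht)
      calc (∫ t in Set.Ioc (0:ℝ) 1, ‖h m t‖)
          ≤ ∫ _t in Set.Ioc (0:ℝ) 1, vB C β ‖ζ‖ M m :=
            integral_mono_of_nonneg (Filter.Eventually.of_forall fun t => norm_nonneg _)
              (integrableOn_const measure_Ioc_lt_top.ne) hle
        _ = vB C β ‖ζ‖ M m := by
            simp [Real.volume_Ioc]
    have hsummable : Summable fun m : ℕ => ∫ t in Set.Ioc (0:ℝ) 1, ‖h m t‖ :=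
      Summable.of_nonneg_of_le (fun m => integral_nonneg fun t => norm_nonneg _)
        hIntNorm (summable_vB hC.le (norm_nonneg ζ) hM0)
    -- swap sum and integral
    have hswap : ∑' m : ℕ, (∫ t in Set.Ioc (0:ℝ) 1, h m t)
        = ∫ t in Set.Ioc (0:ℝ) 1, ∑' m : ℕ, h m t :=
      integral_tsum_of_summable_integral_norm hInt hsummable
    -- Kker identity
    have hK : ∀ t : ℝ, Kker b ((t:ℂ)*ζ) ζ * ψ ((t:ℂ)*ζ) = ∑' m : ℕ, h m t := by
      intro t
      rw [Kker]
      exact (tsum_mul_right).symm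
    calc (∑' m : ℕ, (Nat.factorial (m + 1) : ℂ)⁻¹ *
        conv (convIter b m) (fun ξ => (-ξ) ^ (m + 1) * ψ ξ) ζ)
        = ∑' m : ℕ, ζ * ∫ t in (0:ℝ)..1, h m t := tsum_congr hstep1
      _ = ζ * ∑' m : ℕ, ∫ t in (0:ℝ)..1, h m t := tsum_mul_left
      _ = ζ * ∑' m : ℕ, ∫ t in Set.Ioc (0:ℝ) 1, h m t := by
          congr 1
          exact tsum_congr fun m => intervalIntegral.integral_of_le zero_le_one
      _ = ζ * ∫ t in Set.Ioc (0:ℝ) 1, ∑' m : ℕ, h m t := by rw [hswap]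
      _ = ζ * ∫ t in (0:ℝ)..1, ∑' m : ℕ, h m t := by
          rw [intervalIntegral.integral_of_le zero_le_one]
      _ = ζ * ∫ t in (0:ℝ)..1, Kker b ((t:ℂ)*ζ) ζ * ψ ((t:ℂ)*ζ) := by
          congr 1
          exact intervalIntegral.integral_congr fun t _ => (hK t).symm
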